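/- Let n ≥ 2, let μ₁,…,μₙ be atomless Borel probability measures on ℝ with cumulative distribution functions F_i(x) = μ_i((−∞,x]), and let g : ℝ² → ℝ be measurable such that (x₁,…,xₙ) ↦ g(min_i x_i, max_i x_i) is integrable with respect to the product measure μ₁ ⊗ ⋯ ⊗ μₙ. Then ∫_{ℝ^n} g(min_i x_i, max_i x_i) d(μ₁ ⊗ ⋯ ⊗ μₙ)(x) = Σ_{j ≠ k} ∫_ℝ ∫_{(−∞,v)} g(u,v) ∏_{i ∉ {j,k}} (F_i(v) − F_i(u)) dμ_j(u) dμ_k(v). -/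

import Mathlib

open MeasureTheory Finset Set

section aux
variable {n : ℕ}

variable {n : ℕ}

lemma exists_split (μ : Fin n → Measure ℝ) [∀ i, IsProbabilityMeasure (μ i)]
    (j k : Fin n) (hjk : j ≠ k) :
    ∃ E : ((ℝ × ℝ) × ({i : Fin n // ¬(i = j ∨ i = k)} → ℝ)) ≃ᵐ (Fin n → ℝ),
      MeasurePreserving E (((μ k).prod (μ j)).prod (Measure.pi fun i => μ i.1))
        (Measure.pi μ) ∧
      ∀ v u z, E ((v, u), z) = fun i =>
        if h : i = j ∨ i = k then (if i = j then u else v) else z ⟨i, h⟩ := by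
  classical
  set p : Fin n → Prop := fun i => i = j ∨ i = k with hp
  let e2 : Fin 2 ≃ {i // p i} :=
    { toFun := ![⟨k, Or.inr rfl⟩, ⟨j, Or.inl rfl⟩]
      invFun := fun s => if s.1 = k then 0 else 1
      left_inv := by
        intro m
        fin_cases m
        · simp
        · simp [hjk]
      right_inv := by
        rintro ⟨i, hi | hi⟩
        · subst hi; simp [hjk]
        · subst hi; simp }
  have he20 : (e2 0 : Fin n) = k := rfl
  have he21 : (e2 1 : Fin n) = j := rfl
  haveI : ∀ m : Fin 2, SigmaFinite ((fun m : Fin 2 => μ (e2 m : Fin n)) m) := fun m => by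
    infer_instance
  refine ⟨((MeasurableEquiv.piFinTwo (fun _ => ℝ)).symm.prodCongr
      (MeasurableEquiv.refl _)).trans
      (((MeasurableEquiv.piCongrLeft (fun _ => ℝ) e2).prodCongr
        (MeasurableEquiv.refl _)).trans
        (MeasurableEquiv.piEquivPiSubtypeProd (fun _ => ℝ) p).symm), ?_, ?_⟩
  · have mp1 := (measurePreserving_piEquivPiSubtypeProd μ p).symm
      (MeasurableEquiv.piEquivPiSubtypeProd (fun _ => ℝ) p)
    have mp2 := measurePreserving_piCongrLeft (fun i : {i // p i} => μ i.1) e2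
    have mp3 := (measurePreserving_piFinTwo (fun m : Fin 2 => μ (e2 m : Fin n))).symm
      (MeasurableEquiv.piFinTwo (fun _ => ℝ))
    exact mp1.comp ((mp2.prod (MeasurePreserving.id _)).comp
      (mp3.prod (MeasurePreserving.id _)))
  · intro v u z
    funext i
    show (MeasurableEquiv.piEquivPiSubtypeProd (fun _ => ℝ) p).symm
      ((MeasurableEquiv.piCongrLeft (fun _ => ℝ) e2)
        ((MeasurableEquiv.piFinTwo (fun _ => ℝ)).symm (v, u)), z) i = _
    by_cases h : p i
    · have hmem : (⟨i, h⟩ : {i // p i}) = if i = j then e2 1 else e2 0 := by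
        by_cases hij : i = j
        · simp [hij, Subtype.ext_iff, he21]
        · simp only [hij, if_false, Subtype.ext_iff, he20]
          exact h.resolve_left hij
      rw [show ((MeasurableEquiv.piEquivPiSubtypeProd (fun _ => ℝ) p).symm
          ((MeasurableEquiv.piCongrLeft (fun _ => ℝ) e2)
            ((MeasurableEquiv.piFinTwo (fun _ => ℝ)).symm (v, u)), z) i)
          = if h : p i then ((MeasurableEquiv.piCongrLeft (fun _ => ℝ) e2)
            ((MeasurableEquiv.piFinTwo (fun _ => ℝ)).symm (v, u))) ⟨i, h⟩ else z ⟨i, h⟩ from rfl]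
      rw [dif_pos h, dif_pos h, hmem]
      by_cases hij : i = j
      · simp only [hij, if_true, MeasurableEquiv.coe_piCongrLeft,
          Equiv.piCongrLeft_apply_apply]
        rfl
      · simp only [hij, if_false, MeasurableEquiv.coe_piCongrLeft,
          Equiv.piCongrLeft_apply_apply]
        rfl
    · rw [show ((MeasurableEquiv.piEquivPiSubtypeProd (fun _ => ℝ) p).symm
          ((MeasurableEquiv.piCongrLeft (fun _ => ℝ) e2)
            ((MeasurableEquiv.piFinTwo (fun _ => ℝ)).symm (v, u)), z) i)
          = if h : p i then ((MeasurableEquiv.piCongrLeft (fun _ => ℝ) e2)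
            ((MeasurableEquiv.piFinTwo (fun _ => ℝ)).symm (v, u))) ⟨i, h⟩ else z ⟨i, h⟩ from rfl]
      rw [dif_neg h, dif_neg h]


lemma diag_null {n : ℕ} (μ : Fin n → Measure ℝ) [∀ i, IsProbabilityMeasure (μ i)]
    [∀ i, NullSingletonClass (μ i)] (j k : Fin n) (hjk : j ≠ k) :
    Measure.pi μ {x | x j = x k} = 0 := by
  obtain ⟨E, hmp, hE⟩ := exists_split μ j k hjk
  have hD : MeasurableSet {x : Fin n → ℝ | x j = x k} :=
    measurableSet_eq_fun (measurable_pi_apply j) (measurable_pi_apply k)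
  rw [← hmp.measure_preimage hD.nullMeasurableSet]
  have hpre : E ⁻¹' {x : Fin n → ℝ | x j = x k}
      = {y : ℝ × ℝ | y.2 = y.1} ×ˢ (univ : Set ({i : Fin n // ¬(i = j ∨ i = k)} → ℝ)) := by
    ext ⟨⟨v, u⟩, z⟩
    simp only [Set.mem_preimage, Set.mem_setOf_eq, Set.mem_prod, Set.mem_univ, and_true]
    rw [hE]
    simp [hjk, Ne.symm hjk]
  rw [hpre, Measure.prod_prod, measure_univ, mul_one]
  have hS : MeasurableSet {y : ℝ × ℝ | y.2 = y.1} :=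
    measurableSet_eq_fun measurable_snd measurable_fst
  rw [Measure.prod_apply hS]
  have : ∀ a : ℝ, (μ j) (Prod.mk a ⁻¹' {y : ℝ × ℝ | y.2 = y.1}) = 0 := by
    intro a
    have : Prod.mk a ⁻¹' {y : ℝ × ℝ | y.2 = y.1} = {a} := by
      ext b; simp [eq_comm]
    rw [this, measure_singleton]
  simp [this]

lemma pair_term {n : ℕ} (μ : Fin n → Measure ℝ) [∀ i, IsProbabilityMeasure (μ i)]
    [∀ i, NullSingletonClass (μ i)] (g : ℝ → ℝ → ℝ)
    (hne : (Finset.univ : Finset (Fin n)).Nonempty)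
    (hint : Integrable (fun x : Fin n → ℝ =>
      g (Finset.univ.inf' hne x) (Finset.univ.sup' hne x)) (Measure.pi μ))
    (j k : Fin n) (hjk : j ≠ k) :
    ∫ x, ({x : Fin n → ℝ | (∀ i, i ≠ j → x j < x i) ∧ (∀ i, i ≠ k → x i < x k)}.indicator
        (fun x => g (Finset.univ.inf' hne x) (Finset.univ.sup' hne x)) x) ∂(Measure.pi μ)
      = ∫ v, (∫ u in Set.Iio v,
            g u v * ∏ i ∈ (Finset.univ.erase j).erase k,
              ((μ i (Set.Iic v)).toReal - (μ i (Set.Iic u)).toReal) ∂(μ j)) ∂(μ k) := by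
  classical
  set f : (Fin n → ℝ) → ℝ := fun x => g (Finset.univ.inf' hne x) (Finset.univ.sup' hne x)
    with hf
  set A : Set (Fin n → ℝ) :=
    {x | (∀ i, i ≠ j → x j < x i) ∧ (∀ i, i ≠ k → x i < x k)} with hA
  have hAmeas : MeasurableSet A := by
    have hAeq : A = (⋂ i, {x : Fin n → ℝ | i ≠ j → x j < x i})
        ∩ ⋂ i, {x : Fin n → ℝ | i ≠ k → x i < x k} := by
      ext x; simp [hA, Set.mem_iInter]
    rw [hAeq]
    apply MeasurableSet.inter
    · refine MeasurableSet.iInter fun i => ?_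
      by_cases h : i = j
      · simp [h]
      · simpa [h] using
          measurableSet_lt (measurable_pi_apply j) (measurable_pi_apply i)
    · refine MeasurableSet.iInter fun i => ?_
      by_cases h : i = k
      · simp [h]
      · simpa [h] using
          measurableSet_lt (measurable_pi_apply i) (measurable_pi_apply k)
  obtain ⟨E, hmp, hE⟩ := exists_split μ j k hjk
  set ν := (((μ k).prod (μ j)).prod
    (Measure.pi fun i : {i : Fin n // ¬(i = j ∨ i = k)} => μ i.1)) with hν
  have hindint : Integrable (A.indicator f) (Measure.pi μ) := hint.indicator hAmeas
  have hcomp : Integrable (fun w => A.indicator f (E w)) ν := by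
    have h' := E.measurableEmbedding.integrable_map_iff (g := A.indicator f) (μ := ν)
    rw [hmp.map_eq] at h'
    exact h'.mp hindint
  have h1 : ∫ x, A.indicator f x ∂(Measure.pi μ) = ∫ w, A.indicator f (E w) ∂ν :=
    (hmp.integral_comp E.measurableEmbedding _).symm
  have hXj : ∀ v u z, E ((v, u), z) j = u := by
    intro v u z; rw [hE]; simp
  have hXk : ∀ v u z, E ((v, u), z) k = v := by
    intro v u z; rw [hE]; simp [Ne.symm hjk]
  have hXo : ∀ v u z (i : {i : Fin n // ¬(i = j ∨ i = k)}), E ((v, u), z) i.1 = z i := by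
    intro v u z i; rw [hE]; simp [i.2]
  have hkey : ∀ (v u : ℝ) z, A.indicator f (E ((v, u), z))
      = if u < v then (Set.univ.pi fun _ : {i : Fin n // ¬(i = j ∨ i = k)} =>
          Set.Ioo u v).indicator (fun _ => g u v) z else 0 := by
    intro v u z
    by_cases huv : u < v
    · rw [if_pos huv]
      by_cases hz : z ∈ Set.univ.pi fun _ : {i : Fin n // ¬(i = j ∨ i = k)} => Set.Ioo u v
      · have hzi : ∀ i : {i : Fin n // ¬(i = j ∨ i = k)}, z i ∈ Set.Ioo u v := fun i =>
          hz i (Set.mem_univ i)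
        have hmemA : E ((v, u), z) ∈ A := by
          constructor
          · intro i hi
            rw [hXj]
            by_cases hik : i = k
            · rw [hik, hXk]; exact huv
            · have hpi : ¬(i = j ∨ i = k) := by tauto
              rw [hXo v u z ⟨i, hpi⟩]; exact (hzi ⟨i, hpi⟩).1
          · intro i hi
            rw [hXk]
            by_cases hij : i = j
            · rw [hij, hXj]; exact huv
            · have hpi : ¬(i = j ∨ i = k) := by tauto
              rw [hXo v u z ⟨i, hpi⟩]; exact (hzi ⟨i, hpi⟩).2
        rw [Set.indicator_of_mem hmemA, Set.indicator_of_mem hz]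
        have hle : ∀ i, u ≤ E ((v, u), z) i := by
          intro i
          by_cases hij : i = j
          · rw [hij, hXj]
          · by_cases hik : i = k
            · rw [hik, hXk]; exact huv.le
            · have hpi : ¬(i = j ∨ i = k) := by tauto
              rw [hXo v u z ⟨i, hpi⟩]; exact (hzi ⟨i, hpi⟩).1.le
        have hge : ∀ i, E ((v, u), z) i ≤ v := by
          intro i
          by_cases hij : i = j
          · rw [hij, hXj]; exact huv.le
          · by_cases hik : i = k
            · rw [hik, hXk]
            · have hpi : ¬(i = j ∨ i = k) := by tauto
              rw [hXo v u z ⟨i, hpi⟩]; exact (hzi ⟨i, hpi⟩).2.le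
        have hinf : Finset.univ.inf' hne (E ((v, u), z)) = u := by
          refine le_antisymm ?_ (Finset.le_inf' _ _ fun i _ => hle i)
          have h' := Finset.inf'_le (f := E ((v, u), z)) (Finset.mem_univ j)
          rw [hXj] at h'
          exact h'
        have hsup : Finset.univ.sup' hne (E ((v, u), z)) = v := by
          refine le_antisymm (Finset.sup'_le _ _ fun i _ => hge i) ?_
          have h' := Finset.le_sup' (f := E ((v, u), z)) (Finset.mem_univ k)
          rw [hXk] at h'
          exact h'
        rw [hf]; simp only [hinf, hsup]
      · have hnA : E ((v, u), z) ∉ A := by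
          intro hmem
          apply hz
          intro i _
          exact ⟨by simpa [hXo v u z i, hXj] using hmem.1 i.1 (fun h => i.2 (Or.inl h)),
            by simpa [hXo v u z i, hXk] using hmem.2 i.1 (fun h => i.2 (Or.inr h))⟩
        rw [Set.indicator_of_notMem hnA, Set.indicator_of_notMem hz]
    · rw [if_neg huv]
      have hnA : E ((v, u), z) ∉ A := by
        intro hmem
        have h' := hmem.1 k (Ne.symm hjk)
        rw [hXj, hXk] at h'
        exact huv h'
      rw [Set.indicator_of_notMem hnA]
  rw [h1, hν, MeasureTheory.integral_prod _ hcomp]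
  set G : ℝ × ℝ → ℝ := fun w =>
    if w.2 < w.1 then (∏ i : {i : Fin n // ¬(i = j ∨ i = k)},
      (μ i.1 (Set.Ioo w.2 w.1)).toReal) * g w.2 w.1 else 0 with hG
  have h2 : ∀ w : ℝ × ℝ, (∫ z, A.indicator f (E (w, z))
      ∂(Measure.pi fun i : {i : Fin n // ¬(i = j ∨ i = k)} => μ i.1)) = G w := by
    rintro ⟨v, u⟩
    by_cases huv : u < v
    · simp only [hkey, if_pos huv, hG]
      rw [integral_indicator_const _ (MeasurableSet.univ_pi fun _ => measurableSet_Ioo)]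
      simp only [if_pos huv, measureReal_def, Measure.pi_pi, ENNReal.toReal_prod, smul_eq_mul]
    · simp only [hkey, if_neg huv, hG, integral_zero]
  simp only [h2]
  have hGint : Integrable G ((μ k).prod (μ j)) :=
    hcomp.integral_prod_left.congr (Filter.EventuallyEq.of_eq (funext h2))
  rw [MeasureTheory.integral_prod _ hGint]
  refine integral_congr_ae (Filter.Eventually.of_forall fun v => ?_)
  have hGrw : (fun u => G (v, u)) = (Set.Iio v).indicator
      (fun u => (∏ i : {i : Fin n // ¬(i = j ∨ i = k)},
        (μ i.1 (Set.Ioo u v)).toReal) * g u v) := by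
    funext u
    by_cases h : u < v
    · simp [hG, Set.indicator, Set.mem_Iio, h]
    · simp [hG, Set.indicator, Set.mem_Iio, h]
  dsimp only
  rw [hGrw, integral_indicator measurableSet_Iio]
  refine setIntegral_congr_fun measurableSet_Iio fun u hu => ?_
  have hu' : u < v := hu
  have hfactor : ∀ i : Fin n, (μ i (Set.Ioo u v)).toReal
      = (μ i (Set.Iic v)).toReal - (μ i (Set.Iic u)).toReal := by
    intro i
    have hIoo : μ i (Set.Ioo u v) = μ i (Set.Ioc u v) := measure_congr Ioo_ae_eq_Ioc
    have hun : Set.Iic u ∪ Set.Ioc u v = Set.Iic v := Set.Iic_union_Ioc_eq_Iic hu'.le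
    have hadd : μ i (Set.Iic v) = μ i (Set.Iic u) + μ i (Set.Ioc u v) := by
      rw [← hun, measure_union (Set.Iic_disjoint_Ioc le_rfl) measurableSet_Ioc]
    rw [hIoo, hadd, ENNReal.toReal_add (measure_ne_top _ _) (measure_ne_top _ _)]
    ring
  rw [mul_comm]
  congr 1
  have hiff : ∀ x : Fin n, x ∈ (Finset.univ.erase j).erase k ↔ ¬(x = j ∨ x = k) := by
    intro x
    simp only [Finset.mem_erase, Finset.mem_univ, and_true]
    tauto
  calc ∏ i : {i : Fin n // ¬(i = j ∨ i = k)}, (μ i.1 (Set.Ioo u v)).toReal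
      = ∏ i : {i : Fin n // ¬(i = j ∨ i = k)},
          ((μ i.1 (Set.Iic v)).toReal - (μ i.1 (Set.Iic u)).toReal) :=
        Finset.prod_congr rfl fun i _ => hfactor i.1
    _ = ∏ i ∈ (Finset.univ.erase j).erase k,
          ((μ i (Set.Iic v)).toReal - (μ i (Set.Iic u)).toReal) :=
        (Finset.prod_subtype ((Finset.univ.erase j).erase k) hiff
          (fun i => (μ i (Set.Iic v)).toReal - (μ i (Set.Iic u)).toReal)).symm

end aux

/-- If `X₁,…,Xₙ` (`n ≥ 2`) are independent with atomless laws `μ₁,…,μₙ` of c.d.f.s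
`F₁,…,Fₙ`, and `g(min_i X_i, max_i X_i)` is integrable, then
`E[g(min_i X_i, max_i X_i)]
  = Σ_{j≠k} ∫ ∫_{u<v} g(u,v) ∏_{i∉{j,k}} (F_i(v)−F_i(u)) dμ_j(u) dμ_k(v)`. -/
theorem expectation_g_min_max_independent (n : ℕ) (hn : 2 ≤ n) (μ : Fin n → Measure ℝ)
    [∀ i, IsProbabilityMeasure (μ i)] [∀ i, NullSingletonClass (μ i)] (g : ℝ → ℝ → ℝ)
    (hg : Measurable (Function.uncurry g))
    (hint : Integrable
      (fun x : Fin n → ℝ =>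
        g (Finset.univ.inf' ⟨⟨0, by omega⟩, Finset.mem_univ _⟩ x)
          (Finset.univ.sup' ⟨⟨0, by omega⟩, Finset.mem_univ _⟩ x))
      (Measure.pi μ)) :
    (∫ x : Fin n → ℝ,
        g (Finset.univ.inf' ⟨⟨0, by omega⟩, Finset.mem_univ _⟩ x)
          (Finset.univ.sup' ⟨⟨0, by omega⟩, Finset.mem_univ _⟩ x)
        ∂(Measure.pi μ))
      = ∑ j : Fin n, ∑ k ∈ Finset.univ.erase j,
          ∫ v, (∫ u in Set.Iio v,
              g u v *
                ∏ i ∈ (Finset.univ.erase j).erase k,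
                  ((μ i (Set.Iic v)).toReal - (μ i (Set.Iic u)).toReal)
            ∂(μ j)) ∂(μ k) := by
  classical
  have hne : (Finset.univ : Finset (Fin n)).Nonempty :=
    ⟨⟨0, by omega⟩, Finset.mem_univ _⟩
  set f : (Fin n → ℝ) → ℝ :=
    fun x => g (Finset.univ.inf' hne x) (Finset.univ.sup' hne x) with hf
  set A : Fin n → Fin n → Set (Fin n → ℝ) := fun j k =>
    {x | (∀ i, i ≠ j → x j < x i) ∧ (∀ i, i ≠ k → x i < x k)} with hA
  have hAmeas : ∀ j k, MeasurableSet (A j k) := by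
    intro j k
    have hAeq : A j k = (⋂ i, {x : Fin n → ℝ | i ≠ j → x j < x i})
        ∩ ⋂ i, {x : Fin n → ℝ | i ≠ k → x i < x k} := by
      ext x; simp [hA, Set.mem_iInter]
    rw [hAeq]
    apply MeasurableSet.inter
    · refine MeasurableSet.iInter fun i => ?_
      by_cases h : i = j
      · simp [h]
      · simpa [h] using
          measurableSet_lt (measurable_pi_apply j) (measurable_pi_apply i)
    · refine MeasurableSet.iInter fun i => ?_
      by_cases h : i = k
      · simp [h]
      · simpa [h] using
          measurableSet_lt (measurable_pi_apply i) (measurable_pi_apply k)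
  have hint' : Integrable f (Measure.pi μ) := hint
  have hU : Measure.pi μ
      (⋃ (j : Fin n) (k : Fin n) (_ : j ≠ k), {x : Fin n → ℝ | x j = x k}) = 0 := by
    refine measure_iUnion_null fun j => measure_iUnion_null fun k => ?_
    rcases eq_or_ne j k with h | h
    · subst h; simp
    · refine measure_mono_null (Set.iUnion_subset fun _ => subset_rfl) (diag_null μ j k h)
  have hmem : ∀ᵐ x ∂(Measure.pi μ),
      x ∉ ⋃ (j : Fin n) (k : Fin n) (_ : j ≠ k), {x : Fin n → ℝ | x j = x k} :=
    measure_eq_zero_iff_ae_notMem.mp hU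
  have hcongr : ∫ x, f x ∂(Measure.pi μ)
      = ∫ x, (∑ j : Fin n, ∑ k ∈ Finset.univ.erase j, (A j k).indicator f x)
        ∂(Measure.pi μ) := by
    refine integral_congr_ae (hmem.mono fun x hx => ?_)
    have hdist : ∀ j k : Fin n, j ≠ k → x j ≠ x k := by
      intro j k hjk heq
      exact hx (Set.mem_iUnion.2 ⟨j, Set.mem_iUnion.2 ⟨k, Set.mem_iUnion.2 ⟨hjk, heq⟩⟩⟩)
    obtain ⟨j₀, -, hj₀⟩ := Finset.exists_min_image Finset.univ x hne
    obtain ⟨k₀, -, hk₀⟩ := Finset.exists_max_image Finset.univ x hne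
    have hminlt : ∀ i, i ≠ j₀ → x j₀ < x i := fun i hi =>
      lt_of_le_of_ne (hj₀ i (Finset.mem_univ i)) (hdist j₀ i (Ne.symm hi))
    have hmaxlt : ∀ i, i ≠ k₀ → x i < x k₀ := fun i hi =>
      lt_of_le_of_ne (hk₀ i (Finset.mem_univ i)) (hdist i k₀ hi)
    have hexne : ∃ i : Fin n, i ≠ j₀ := by
      by_cases h : (⟨0, by omega⟩ : Fin n) = j₀
      · exact ⟨⟨1, by omega⟩, fun h' => by
          rw [← h] at h'; exact absurd (Fin.mk.injEq .. ▸ h') (by simp)⟩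
      · exact ⟨_, h⟩
    obtain ⟨i₁, hi₁⟩ := hexne
    have hlt : x j₀ < x k₀ := by
      rcases eq_or_ne i₁ k₀ with h | h
      · exact h ▸ hminlt i₁ hi₁
      · exact (hminlt i₁ hi₁).trans (hmaxlt i₁ h)
    have hj₀k₀ : j₀ ≠ k₀ := fun h => (ne_of_lt hlt) (congrArg x h)
    have hxA : x ∈ A j₀ k₀ := ⟨hminlt, hmaxlt⟩
    dsimp only
    rw [Finset.sum_eq_single_of_mem j₀ (Finset.mem_univ j₀) ?h1]
    case h1 =>
      intro b _ hbne
      refine Finset.sum_eq_zero fun k _ => Set.indicator_of_notMem (fun hmem' => ?_) f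
      exact lt_asymm (hminlt b hbne) (hmem'.1 j₀ (Ne.symm hbne))
    rw [Finset.sum_eq_single_of_mem k₀
      (Finset.mem_erase.2 ⟨Ne.symm hj₀k₀, Finset.mem_univ _⟩) ?h2]
    case h2 =>
      intro b _ hbne
      refine Set.indicator_of_notMem (fun hmem' => ?_) f
      exact lt_asymm (hmaxlt b hbne) (hmem'.2 k₀ (Ne.symm hbne))
    rw [Set.indicator_of_mem hxA]
  rw [show (∫ x : Fin n → ℝ,
        g (Finset.univ.inf' ⟨⟨0, by omega⟩, Finset.mem_univ _⟩ x)
          (Finset.univ.sup' ⟨⟨0, by omega⟩, Finset.mem_univ _⟩ x)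
        ∂(Measure.pi μ)) = ∫ x, f x ∂(Measure.pi μ) from rfl, hcongr]
  rw [integral_finset_sum _ (fun j _ =>
    integrable_finset_sum _ (fun k _ => hint'.indicator (hAmeas j k)))]
  refine Finset.sum_congr rfl fun j _ => ?_
  rw [integral_finset_sum _ (fun k _ => hint'.indicator (hAmeas j k))]
  refine Finset.sum_congr rfl fun k hk => ?_
  exact pair_term μ g hne hint' j k (Ne.symm (Finset.mem_erase.1 hk).1)
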